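/- arXiv:2512.04985 — 4 statements merged into one kernel-verified Lean document; each statement's English description precedes it below -/
import Mathlib

section
/- Let p₀ be a probability density on ℝ^d, let r : ℝ^d → [0,∞) be measurable with 0 < ∫ r(x) p₀(x) dx < ∞, and let t ∈ (0,1). Then the conditional reward ρ_t is differentiable on ℝ^d and, for every y ∈ ℝ^d, ∇ρ_t(y) = ρ_t(y) · (∇ log q_t^r(y) − ∇ log q_t(y)). That is, the gradient of the conditional reward equals the conditional reward times the difference between the score of the reward-reweighted smoothed density and the score of the original smoothed density. -/
open MeasureTheory Real

/-- The Gaussian kernel `G_t(y,x) = (2π(1−t))^{−d/2} exp(−‖y−√t·x‖²/(2(1−t)))`. -/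
noncomputable def gaussKernel (d : ℕ) (t : ℝ) (y x : EuclideanSpace ℝ (Fin d)) : ℝ :=
  (2 * π * (1 - t)) ^ (-(d : ℝ) / 2) *
    Real.exp (-‖y - Real.sqrt t • x‖ ^ 2 / (2 * (1 - t)))

/-- The smoothed density `q_t(y) = ∫ p₀(x) G_t(y,x) dx`. -/
noncomputable def smoothed (d : ℕ) (p₀ : EuclideanSpace ℝ (Fin d) → ℝ) (t : ℝ)
    (y : EuclideanSpace ℝ (Fin d)) : ℝ :=
  ∫ x, p₀ x * gaussKernel d t y x

/-- The posterior density `π_t(x|y) = p₀(x) G_t(y,x)/q_t(y)`. -/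
noncomputable def post (d : ℕ) (p₀ : EuclideanSpace ℝ (Fin d) → ℝ) (t : ℝ)
    (x y : EuclideanSpace ℝ (Fin d)) : ℝ :=
  p₀ x * gaussKernel d t y x / smoothed d p₀ t y

/-- The conditional reward `ρ_t(y) = ∫ r(x) π_t(x|y) dx`. -/
noncomputable def condReward (d : ℕ) (p₀ r : EuclideanSpace ℝ (Fin d) → ℝ) (t : ℝ)
    (y : EuclideanSpace ℝ (Fin d)) : ℝ :=
  ∫ x, r x * post d p₀ t x y

/-- The reward-reweighted density `p₀^r(x) = r(x)p₀(x)/∫ r p₀`. -/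
noncomputable def reweighted (d : ℕ) (p₀ r : EuclideanSpace ℝ (Fin d) → ℝ)
    (x : EuclideanSpace ℝ (Fin d)) : ℝ :=
  r x * p₀ x / ∫ x', r x' * p₀ x'

/-- A probability density on `ℝ^d`: measurable, nonnegative, integrating to one. -/
def IsDensity {d : ℕ} (p : EuclideanSpace ℝ (Fin d) → ℝ) : Prop :=
  Measurable p ∧ (∀ x, 0 ≤ p x) ∧ ∫ x, p x = 1

section Aux
open InnerProductSpace

variable {d : ℕ}

local notation "E" => EuclideanSpace ℝ (Fin d)

noncomputable def gradKernel (d : ℕ) (t : ℝ) (y x : EuclideanSpace ℝ (Fin d)) :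
    EuclideanSpace ℝ (Fin d) :=
  (-(1 - t)⁻¹ * gaussKernel d t y x) • (y - Real.sqrt t • x)

lemma base_pos {t : ℝ} (ht : t ∈ Set.Ioo (0:ℝ) 1) : (0:ℝ) < 2 * π * (1 - t) := by
  have := Real.pi_pos; have := ht.2; nlinarith

lemma gaussKernel_pos {t : ℝ} (ht : t ∈ Set.Ioo (0:ℝ) 1) (y x : E) :
    0 < gaussKernel d t y x :=
  mul_pos (Real.rpow_pos_of_pos (base_pos ht) _) (Real.exp_pos _)

lemma gaussKernel_le {t : ℝ} (ht : t ∈ Set.Ioo (0:ℝ) 1) (y x : E) :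
    gaussKernel d t y x ≤ (2 * π * (1 - t)) ^ (-(d : ℝ) / 2) := by
  have hσ : (0:ℝ) < 1 - t := by linarith [ht.2]
  have h1 : Real.exp (-‖y - Real.sqrt t • x‖ ^ 2 / (2 * (1 - t))) ≤ 1 := by
    apply Real.exp_le_one_iff.2
    apply div_nonpos_of_nonpos_of_nonneg
    · simpa using sq_nonneg ‖y - Real.sqrt t • x‖
    · positivity
  calc gaussKernel d t y x ≤ (2 * π * (1 - t)) ^ (-(d : ℝ) / 2) * 1 :=
        mul_le_mul_of_nonneg_left h1 (Real.rpow_pos_of_pos (base_pos ht) _).le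
    _ = _ := mul_one _

lemma mul_exp_le {σ s : ℝ} (hσ : 0 < σ) (hs : 0 ≤ s) :
    s * Real.exp (-s ^ 2 / (2 * σ)) ≤ Real.sqrt (2 * σ) := by
  have hw : 0 < Real.sqrt (2 * σ) := Real.sqrt_pos.2 (by linarith)
  have hw2 : Real.sqrt (2 * σ) ^ 2 = 2 * σ := Real.sq_sqrt (by linarith)
  have he : s ^ 2 / (2 * σ) + 1 ≤ Real.exp (s ^ 2 / (2 * σ)) := Real.add_one_le_exp _
  have key : s ≤ Real.sqrt (2 * σ) * Real.exp (s ^ 2 / (2 * σ)) := by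
    have h2 : Real.sqrt (2 * σ) * (s ^ 2 / (2 * σ) + 1) ≤
        Real.sqrt (2 * σ) * Real.exp (s ^ 2 / (2 * σ)) :=
      mul_le_mul_of_nonneg_left he hw.le
    have h4 : s * Real.sqrt (2 * σ) ≤ s ^ 2 + 2 * σ := by
      nlinarith [sq_nonneg (s - Real.sqrt (2 * σ)), hw2, mul_nonneg hs hw.le]
    have h7 : Real.sqrt (2 * σ) * Real.sqrt (2 * σ) = 2 * σ := Real.mul_self_sqrt (by linarith)
    have hexp : Real.sqrt (2 * σ) * (s ^ 2 / (2 * σ) + 1) * Real.sqrt (2 * σ) = s ^ 2 + 2 * σ := by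
      have hA : Real.sqrt 2 ^ 2 * Real.sqrt σ ^ 2 = 2 * σ := by
        rw [Real.sq_sqrt (by norm_num : (0:ℝ) ≤ 2), Real.sq_sqrt hσ.le]
      field_simp
      linear_combination hw2
    have h5 : s ≤ Real.sqrt (2 * σ) * (s ^ 2 / (2 * σ) + 1) := by
      rw [← mul_le_mul_iff_of_pos_right hw]
      calc s * Real.sqrt (2 * σ) ≤ s ^ 2 + 2 * σ := h4
        _ = _ := hexp.symm
    linarith
  rw [neg_div, Real.exp_neg, ← div_eq_mul_inv]
  exact (div_le_iff₀ (Real.exp_pos _)).2 key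

lemma gradKernel_norm_le {t : ℝ} (ht : t ∈ Set.Ioo (0:ℝ) 1) (y x : E) :
    ‖gradKernel d t y x‖ ≤
      (2 * π * (1 - t)) ^ (-(d : ℝ) / 2) * ((1 - t)⁻¹ * Real.sqrt (2 * (1 - t))) := by
  have hσ : (0:ℝ) < 1 - t := by linarith [ht.2]
  set c := (2 * π * (1 - t)) ^ (-(d : ℝ) / 2) with hc
  have hcpos : 0 < c := Real.rpow_pos_of_pos (base_pos ht) _
  rw [gradKernel, norm_smul]
  have hGpos := gaussKernel_pos (d := d) ht y x
  have h1 : ‖-(1 - t)⁻¹ * gaussKernel d t y x‖ = (1 - t)⁻¹ * gaussKernel d t y x := by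
    rw [Real.norm_eq_abs, abs_mul, abs_neg, abs_inv, abs_of_pos hσ, abs_of_pos hGpos]
  rw [h1, gaussKernel]
  have key : Real.exp (-‖y - Real.sqrt t • x‖ ^ 2 / (2 * (1 - t))) * ‖y - Real.sqrt t • x‖ ≤
      Real.sqrt (2 * (1 - t)) := by
    rw [mul_comm]; exact mul_exp_le hσ (norm_nonneg _)
  calc (1 - t)⁻¹ * (c * Real.exp (-‖y - Real.sqrt t • x‖ ^ 2 / (2 * (1 - t)))) *
        ‖y - Real.sqrt t • x‖
      = c * ((1 - t)⁻¹ * (Real.exp (-‖y - Real.sqrt t • x‖ ^ 2 / (2 * (1 - t))) *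
          ‖y - Real.sqrt t • x‖)) := by ring
    _ ≤ c * ((1 - t)⁻¹ * Real.sqrt (2 * (1 - t))) := by
        apply mul_le_mul_of_nonneg_left _ hcpos.le
        exact mul_le_mul_of_nonneg_left key (by positivity)


lemma gaussKernel_hasFDerivAt {t : ℝ} (ht : t ∈ Set.Ioo (0:ℝ) 1) (x y : E) :
    HasFDerivAt (fun z => gaussKernel d t z x)
      (toDual ℝ E (gradKernel d t y x)) y := by
  have hσ : (0:ℝ) < 1 - t := by linarith [ht.2]
  set a := Real.sqrt t • x with ha
  have h0 : HasFDerivAt (fun z : E => z - a) (ContinuousLinearMap.id ℝ E) y := by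
    simpa using (hasFDerivAt_id y).sub_const a
  have h1 := h0.norm_sq
  have h1' := h1.const_mul (-(2 * (1 - t))⁻¹)
  have hfun : (fun z : E => -‖z - a‖ ^ 2 / (2 * (1 - t))) =
      fun z : E => -(2 * (1 - t))⁻¹ * ‖z - a‖ ^ 2 := by
    funext z; ring
  rw [← hfun] at h1'
  have h2 := h1'.exp
  have h3 := h2.const_mul ((2 * π * (1 - t)) ^ (-(d : ℝ) / 2))
  refine h3.congr_fderiv ?_
  ext w
  simp only [gradKernel, gaussKernel, toDual_apply_apply, ha, ContinuousLinearMap.smul_apply,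
    ContinuousLinearMap.comp_apply, ContinuousLinearMap.id_apply, coe_innerSL_apply,
    innerSL_apply_apply, real_inner_smul_left, smul_eq_mul, ← Nat.cast_smul_eq_nsmul ℝ]
  push_cast
  field_simp



lemma gaussKernel_continuous {t : ℝ} (z : E) :
    Continuous (fun a : E => gaussKernel d t z a) := by
  unfold gaussKernel; fun_prop

lemma gradKernel_continuous {t : ℝ} (z : E) :
    Continuous (fun a : E => gradKernel d t z a) := by
  unfold gradKernel gaussKernel; fun_prop

lemma integrable_mul_kernel {t : ℝ} (ht : t ∈ Set.Ioo (0:ℝ) 1) {f : E → ℝ}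
    (hf : Measurable f) (hfi : Integrable f) (y : E) :
    Integrable (fun a => f a * gaussKernel d t y a) := by
  refine Integrable.mono' (hfi.norm.mul_const ((2 * π * (1 - t)) ^ (-(d : ℝ) / 2)))
    ((hf.mul (gaussKernel_continuous y).measurable).aestronglyMeasurable) ?_
  filter_upwards with a
  rw [Real.norm_eq_abs, abs_mul, abs_of_pos (gaussKernel_pos ht y a)]
  exact mul_le_mul_of_nonneg_left (gaussKernel_le ht y a) (abs_nonneg _)

lemma integrable_smul_gradKernel {t : ℝ} (ht : t ∈ Set.Ioo (0:ℝ) 1) {f : E → ℝ}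
    (hf : Measurable f) (hfi : Integrable f) (y : E) :
    Integrable (fun a => f a • gradKernel d t y a) := by
  refine Integrable.mono' (hfi.norm.mul_const
      ((2 * π * (1 - t)) ^ (-(d : ℝ) / 2) * ((1 - t)⁻¹ * Real.sqrt (2 * (1 - t)))))
    (hf.aestronglyMeasurable.smul (gradKernel_continuous y).aestronglyMeasurable) ?_
  filter_upwards with a
  rw [norm_smul, Real.norm_eq_abs]
  exact mul_le_mul_of_nonneg_left (gradKernel_norm_le ht y a) (abs_nonneg _)

lemma smoothed_pos {t : ℝ} (ht : t ∈ Set.Ioo (0:ℝ) 1) {f : E → ℝ}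
    (hf : Measurable f) (hf0 : ∀ x, 0 ≤ f x) (hfi : Integrable f)
    (hpos : 0 < ∫ x, f x) (y : E) : 0 < smoothed d f t y := by
  rw [smoothed]
  rw [integral_pos_iff_support_of_nonneg
    (fun a => mul_nonneg (hf0 a) (gaussKernel_pos ht y a).le)
    (integrable_mul_kernel ht hf hfi y)]
  have hs : Function.support (fun a => f a * gaussKernel d t y a) = Function.support f := by
    ext a
    simp [Function.mem_support, mul_ne_zero_iff, (gaussKernel_pos (d := d) ht y a).ne']
  rw [hs]
  exact (integral_pos_iff_support_of_nonneg (fun a => hf0 a) hfi).1 hpos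

lemma smoothed_hasGradientAt {t : ℝ} (ht : t ∈ Set.Ioo (0:ℝ) 1) {f : E → ℝ}
    (hf : Measurable f) (hf0 : ∀ x, 0 ≤ f x) (hfi : Integrable f) (y : E) :
    HasGradientAt (fun z => smoothed d f t z) (∫ x, f x • gradKernel d t y x) y := by
  have hσ : (0:ℝ) < 1 - t := by linarith [ht.2]
  set K := (2 * π * (1 - t)) ^ (-(d : ℝ) / 2) * ((1 - t)⁻¹ * Real.sqrt (2 * (1 - t))) with hK
  have key : HasFDerivAt (fun z => ∫ a, f a * gaussKernel d t z a)
      (∫ a, toDual ℝ E (f a • gradKernel d t y a)) y := by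
    apply hasFDerivAt_integral_of_dominated_of_fderiv_le (s := Metric.ball y 1)
      (F' := fun z a => toDual ℝ E (f a • gradKernel d t z a))
      (bound := fun a => f a * K) (Metric.ball_mem_nhds y one_pos)
    · filter_upwards with z
      exact (hf.mul (gaussKernel_continuous z).measurable).aestronglyMeasurable
    · exact integrable_mul_kernel ht hf hfi y
    · exact (LinearIsometryEquiv.continuous _).comp_aestronglyMeasurable
        (hf.aestronglyMeasurable.smul (gradKernel_continuous y).aestronglyMeasurable)
    · filter_upwards with a z _
      rw [LinearIsometryEquiv.norm_map, norm_smul, Real.norm_eq_abs, abs_of_nonneg (hf0 a)]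
      exact mul_le_mul_of_nonneg_left (gradKernel_norm_le ht z a) (hf0 a)
    · exact hfi.mul_const K
    · filter_upwards with a z _
      have h := (gaussKernel_hasFDerivAt (d := d) ht a z).const_mul (f a)
      exact h.congr_fderiv (map_smul (toDual ℝ E) (f a) _).symm
  have hswap : (∫ a, toDual ℝ E (f a • gradKernel d t y a)) =
      toDual ℝ E (∫ a, f a • gradKernel d t y a) := by
    have hint := integrable_smul_gradKernel ht hf hfi y
    have hintD : Integrable (fun a => toDual ℝ E (f a • gradKernel d t y a)) := by
      refine Integrable.mono' hint.norm ((LinearIsometryEquiv.continuous _).comp_aestronglyMeasurable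
        hint.aestronglyMeasurable) ?_
      filter_upwards with a
      rw [LinearIsometryEquiv.norm_map]
    apply ContinuousLinearMap.ext
    intro w
    rw [ContinuousLinearMap.integral_apply hintD]
    conv_rhs => rw [toDual_apply_apply]
    rw [real_inner_comm, ← integral_inner hint w]
    refine integral_congr_ae (Filter.Eventually.of_forall fun a => ?_)
    beta_reduce
    rw [toDual_apply_apply, real_inner_comm]
  rw [hswap] at key
  unfold smoothed
  exact hasGradientAt_iff_hasFDerivAt.2 key


/-- The conditional reward `ρ_t` is differentiable and its gradient equals
`ρ_t(y)·(∇ log q_t^r(y) − ∇ log q_t(y))`, where `q_t^r` is the smoothed density of the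
reward-reweighted data density. -/
theorem stmt_3 {d : ℕ} (hd : 1 ≤ d) (p₀ r : EuclideanSpace ℝ (Fin d) → ℝ)
    (hp : IsDensity p₀) (hr : Measurable r) (hr0 : ∀ x, 0 ≤ r x)
    (hrpos : 0 < ∫ x, r x * p₀ x) (hri : Integrable (fun x => r x * p₀ x))
    (t : ℝ) (ht : t ∈ Set.Ioo (0 : ℝ) 1) :
    ∀ y : EuclideanSpace ℝ (Fin d),
      HasGradientAt (fun z => condReward d p₀ r t z)
        (condReward d p₀ r t y •
          (gradient (fun z => Real.log (smoothed d (reweighted d p₀ r) t z)) y -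
            gradient (fun z => Real.log (smoothed d p₀ t z)) y)) y := by
  intro y
  have hσ : (0:ℝ) < 1 - t := by linarith [ht.2]
  have hp₀i : Integrable p₀ := by
    by_contra h
    have h2 := hp.2.2
    rw [integral_undef h] at h2
    norm_num at h2
  set C := ∫ x, r x * p₀ x with hC
  have hCpos : 0 < C := hrpos
  -- reweighted density facts
  have hwdef : reweighted d p₀ r = fun x => r x * p₀ x / C := rfl
  have hwmeas : Measurable (reweighted d p₀ r) := (hr.mul hp.1).div_const C
  have hw0 : ∀ x, 0 ≤ reweighted d p₀ r x := fun x =>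
    div_nonneg (mul_nonneg (hr0 x) (hp.2.1 x)) hCpos.le
  have hwi : Integrable (reweighted d p₀ r) := hri.div_const C
  have hwint : (0:ℝ) < ∫ x, reweighted d p₀ r x := by
    rw [hwdef]
    rw [integral_div]
    positivity
  -- positivity of smoothed densities
  have hQpos : 0 < smoothed d p₀ t y :=
    smoothed_pos ht hp.1 hp.2.1 hp₀i (by rw [hp.2.2]; norm_num) y
  have hQrpos : 0 < smoothed d (reweighted d p₀ r) t y :=
    smoothed_pos ht hwmeas hw0 hwi hwint y
  -- gradients of smoothed densities
  have hgQ := smoothed_hasGradientAt ht hp.1 hp.2.1 hp₀i y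
  have hgQr := smoothed_hasGradientAt ht hwmeas hw0 hwi y
  set g2 := ∫ x, p₀ x • gradKernel d t y x with hg2
  set g1 := ∫ x, reweighted d p₀ r x • gradKernel d t y x with hg1
  -- gradient of the logarithms
  have hlogQ : HasGradientAt (fun z => Real.log (smoothed d p₀ t z))
      ((smoothed d p₀ t y)⁻¹ • g2) y := by
    refine hasGradientAt_iff_hasFDerivAt.2 ?_
    have h := hgQ.hasFDerivAt.log hQpos.ne'
    exact h.congr_fderiv (map_smul (InnerProductSpace.toDual ℝ _) _ _).symm
  have hlogQr : HasGradientAt (fun z => Real.log (smoothed d (reweighted d p₀ r) t z))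
      ((smoothed d (reweighted d p₀ r) t y)⁻¹ • g1) y := by
    refine hasGradientAt_iff_hasFDerivAt.2 ?_
    have h := hgQr.hasFDerivAt.log hQrpos.ne'
    exact h.congr_fderiv (map_smul (InnerProductSpace.toDual ℝ _) _ _).symm
  rw [hlogQ.gradient, hlogQr.gradient]
  -- rewrite condReward as a quotient
  have hkey : ∀ z, condReward d p₀ r t z =
      C * smoothed d (reweighted d p₀ r) t z / smoothed d p₀ t z := by
    intro z
    have h1 : condReward d p₀ r t z =
        (∫ x, r x * p₀ x * gaussKernel d t z x) / smoothed d p₀ t z := by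
      rw [condReward, ← integral_div]
      congr 1
      funext x
      rw [post]
      ring
    have h2 : smoothed d (reweighted d p₀ r) t z =
        (∫ x, r x * p₀ x * gaussKernel d t z x) / C := by
      rw [smoothed, ← integral_div]
      congr 1
      funext x
      rw [hwdef]
      ring
    rw [h1, h2, ← mul_div_assoc, mul_div_cancel_left₀ _ hCpos.ne']
  have hfun : (fun z => condReward d p₀ r t z) =
      fun z => C * smoothed d (reweighted d p₀ r) t z / smoothed d p₀ t z := funext hkey
  rw [hfun, hkey y]
  -- final differentiation
  refine hasGradientAt_iff_hasFDerivAt.2 ?_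
  have h1 := hgQr.hasFDerivAt.const_mul C
  have hinv := (hasDerivAt_inv hQpos.ne').comp_hasFDerivAt y hgQ.hasFDerivAt
  have hmul := h1.mul hinv
  have hfun2 : (fun z => C * smoothed d (reweighted d p₀ r) t z / smoothed d p₀ t z) =
      fun z => C * smoothed d (reweighted d p₀ r) t z * (smoothed d p₀ t z)⁻¹ := by
    funext z; rw [div_eq_mul_inv]
  rw [hfun2]
  refine hmul.congr_fderiv ?_
  ext w
  simp only [InnerProductSpace.toDual_apply_apply, ContinuousLinearMap.smul_apply,
    ContinuousLinearMap.add_apply, inner_sub_left, real_inner_smul_left, smul_eq_mul, Function.comp_apply]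
  field_simp
  ring

end Aux
end

section
/- Let p₀ be a probability density on ℝ^d, let r : ℝ^d → [0,∞) be measurable with ∫ r(x) p₀(x) dx < ∞, and let R > 0 satisfy ∫_{‖x‖₂ < R} p₀(x) dx > 1/2. Then for every t ∈ (0,1) and every y ∈ ℝ^d, the conditional reward obeys the upper bound ρ_t(y) ≤ 2·(∫ r(x) p₀(x) dx)·exp((‖y‖₂ + √t·R)²/(2(1−t))). In particular, ρ_t(y) is finite for every y. -/
open MeasureTheory Real

/-- Upper bound on the conditional reward: if `∫_{‖x‖<R} p₀ > 1/2` then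
`ρ_t(y) ≤ 2·(∫ r p₀)·exp((‖y‖+√t·R)²/(2(1−t)))`. -/
theorem stmt_7 {d : ℕ} (hd : 1 ≤ d) (p₀ r : EuclideanSpace ℝ (Fin d) → ℝ)
    (hp : IsDensity p₀) (hr : Measurable r) (hr0 : ∀ x, 0 ≤ r x)
    (hri : Integrable (fun x => r x * p₀ x))
    (R : ℝ) (hR : 0 < R)
    (hmass : 1 / 2 < ∫ x in {x : EuclideanSpace ℝ (Fin d) | ‖x‖ < R}, p₀ x)
    (t : ℝ) (ht : t ∈ Set.Ioo (0 : ℝ) 1) (y : EuclideanSpace ℝ (Fin d)) :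
    condReward d p₀ r t y ≤
      2 * (∫ x, r x * p₀ x) *
        Real.exp ((‖y‖ + Real.sqrt t * R) ^ 2 / (2 * (1 - t))) := by
    classical
  obtain ⟨hpm, hp0, hp1⟩ := hp
  obtain ⟨ht0, ht1⟩ := ht
  have h1t : (0:ℝ) < 1 - t := by linarith
  have hπ := Real.pi_pos
  set C : ℝ := (2 * π * (1 - t)) ^ (-(d : ℝ) / 2) with hCdef
  have hCpos : 0 < C := by
    apply Real.rpow_pos_of_pos; positivity
  set M : ℝ := (‖y‖ + Real.sqrt t * R) ^ 2 / (2 * (1 - t)) with hMdef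
  -- kernel bounds
  have hG0 : ∀ x, 0 ≤ gaussKernel d t y x := by
    intro x
    unfold gaussKernel
    rw [← hCdef]
    have := Real.exp_pos (-‖y - Real.sqrt t • x‖ ^ 2 / (2 * (1 - t)))
    positivity
  have hGle : ∀ x, gaussKernel d t y x ≤ C := by
    intro x
    unfold gaussKernel
    rw [← hCdef]
    have h1 : Real.exp (-‖y - Real.sqrt t • x‖ ^ 2 / (2 * (1 - t))) ≤ 1 := by
      rw [Real.exp_le_one_iff]
      apply div_nonpos_of_nonpos_of_nonneg
      · simp [sq_nonneg]
      · linarith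
    calc C * Real.exp (-‖y - Real.sqrt t • x‖ ^ 2 / (2 * (1 - t))) ≤ C * 1 :=
          mul_le_mul_of_nonneg_left h1 hCpos.le
      _ = C := mul_one C
  have hGlb : ∀ x : EuclideanSpace ℝ (Fin d), ‖x‖ < R →
      C * Real.exp (-M) ≤ gaussKernel d t y x := by
    intro x hx
    unfold gaussKernel
    rw [← hCdef]
    apply mul_le_mul_of_nonneg_left _ hCpos.le
    apply Real.exp_le_exp.mpr
    have hnorm : ‖y - Real.sqrt t • x‖ ≤ ‖y‖ + Real.sqrt t * R := by
      calc ‖y - Real.sqrt t • x‖ ≤ ‖y‖ + ‖Real.sqrt t • x‖ := norm_sub_le _ _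
        _ = ‖y‖ + Real.sqrt t * ‖x‖ := by
            rw [norm_smul, Real.norm_eq_abs, abs_of_nonneg (Real.sqrt_nonneg t)]
        _ ≤ ‖y‖ + Real.sqrt t * R := by
            have := Real.sqrt_nonneg t; nlinarith
    have hsq : ‖y - Real.sqrt t • x‖ ^ 2 ≤ (‖y‖ + Real.sqrt t * R) ^ 2 :=
      pow_le_pow_left₀ (norm_nonneg _) hnorm 2
    rw [hMdef, neg_div]
    apply neg_le_neg
    gcongr
  -- measurability of the kernel
  have hGmeas : Measurable (fun x => gaussKernel d t y x) := by
    unfold gaussKernel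
    fun_prop
  -- integrability facts
  have hp_int : Integrable p₀ := by
    by_contra h
    rw [integral_undef h] at hp1
    norm_num at hp1
  have hpG_int : Integrable (fun x => p₀ x * gaussKernel d t y x) := by
    apply Integrable.mono' (hp_int.const_mul C)
      ((hpm.mul hGmeas).aestronglyMeasurable)
    filter_upwards with x
    simp only [Pi.mul_apply]
    rw [Real.norm_eq_abs, abs_of_nonneg (mul_nonneg (hp0 x) (hG0 x))]
    calc p₀ x * gaussKernel d t y x ≤ p₀ x * C :=
          mul_le_mul_of_nonneg_left (hGle x) (hp0 x)
      _ = C * p₀ x := mul_comm _ _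
  have hrpG_int : Integrable (fun x => r x * (p₀ x * gaussKernel d t y x)) := by
    apply Integrable.mono' (hri.const_mul C)
      ((hr.mul (hpm.mul hGmeas)).aestronglyMeasurable)
    filter_upwards with x
    simp only [Pi.mul_apply]
    rw [Real.norm_eq_abs, abs_of_nonneg
      (mul_nonneg (hr0 x) (mul_nonneg (hp0 x) (hG0 x)))]
    calc r x * (p₀ x * gaussKernel d t y x) = r x * p₀ x * gaussKernel d t y x := by ring
      _ ≤ r x * p₀ x * C :=
          mul_le_mul_of_nonneg_left (hGle x) (mul_nonneg (hr0 x) (hp0 x))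
      _ = C * (r x * p₀ x) := mul_comm _ _
  -- lower bound on the smoothed density
  set S : Set (EuclideanSpace ℝ (Fin d)) := {x | ‖x‖ < R} with hSdef
  have hSmeas : MeasurableSet S := (isOpen_lt continuous_norm continuous_const).measurableSet
  have hq_lb : C * Real.exp (-M) * (1 / 2) < smoothed d p₀ t y := by
    have h1 : C * Real.exp (-M) * (1 / 2) < C * Real.exp (-M) * ∫ x in S, p₀ x := by
      apply mul_lt_mul_of_pos_left hmass
      positivity
    have h2 : C * Real.exp (-M) * ∫ x in S, p₀ x
        = ∫ x in S, C * Real.exp (-M) * p₀ x := (integral_const_mul _ _).symm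
    have h3 : (∫ x in S, C * Real.exp (-M) * p₀ x)
        ≤ ∫ x in S, p₀ x * gaussKernel d t y x := by
      apply setIntegral_mono_on ((hp_int.const_mul _).integrableOn)
        (hpG_int.integrableOn) hSmeas
      intro x hx
      calc C * Real.exp (-M) * p₀ x = p₀ x * (C * Real.exp (-M)) := mul_comm _ _
        _ ≤ p₀ x * gaussKernel d t y x :=
            mul_le_mul_of_nonneg_left (hGlb x hx) (hp0 x)
    have h4 : (∫ x in S, p₀ x * gaussKernel d t y x)
        ≤ ∫ x, p₀ x * gaussKernel d t y x := by
      apply setIntegral_le_integral hpG_int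
      filter_upwards with x
      exact mul_nonneg (hp0 x) (hG0 x)
    unfold smoothed
    linarith
  have hq_pos : 0 < smoothed d p₀ t y := lt_trans (by positivity) hq_lb
  -- rewrite the conditional reward
  have hcr : condReward d p₀ r t y
      = (∫ x, r x * (p₀ x * gaussKernel d t y x)) / smoothed d p₀ t y := by
    unfold condReward post
    rw [← integral_div]
    congr 1
    ext x
    ring
  have hI0 : 0 ≤ ∫ x, r x * p₀ x :=
    integral_nonneg fun x => mul_nonneg (hr0 x) (hp0 x)
  have hnum : (∫ x, r x * (p₀ x * gaussKernel d t y x)) ≤ C * ∫ x, r x * p₀ x := by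
    rw [← integral_const_mul]
    apply integral_mono hrpG_int (hri.const_mul C)
    intro x
    calc r x * (p₀ x * gaussKernel d t y x) = r x * p₀ x * gaussKernel d t y x := by ring
      _ ≤ r x * p₀ x * C :=
          mul_le_mul_of_nonneg_left (hGle x) (mul_nonneg (hr0 x) (hp0 x))
      _ = C * (r x * p₀ x) := mul_comm _ _
  rw [hcr]
  have key : (∫ x, r x * (p₀ x * gaussKernel d t y x)) / smoothed d p₀ t y
      ≤ (C * ∫ x, r x * p₀ x) / (C * Real.exp (-M) * (1 / 2)) :=
    div_le_div₀ (by positivity) hnum (by positivity) hq_lb.le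
  refine key.trans (le_of_eq ?_)
  rw [Real.exp_neg]
  have hexp : Real.exp M ≠ 0 := (Real.exp_pos M).ne'
  field_simp
end

section
/- There exists a universal constant C > 0 with the following property. For every integer d ≥ 1, every probability density p₀ on ℝ^d, every measurable r : ℝ^d → [0,∞) with 0 < ∫ r(x) p₀(x) dx < ∞, every R > 0 with both ∫_{‖x‖₂ < R} p₀(x) dx > 1/2 and ∫_{‖x‖₂ < R} p₀^r(x) dx > 1/2, every t ∈ (0,1), and every y ∈ ℝ^d, the gradient of the conditional reward satisfies ‖∇ρ_t(y)‖₂ ≤ C·ρ_t(y)·( (‖y‖₂ + √t·R)/(1−t) + d/√(1−t) ). -/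
open MeasureTheory Real

lemma auxA {σ u : ℝ} (hσ : 0 < σ) : u * Real.exp (-u ^ 2 / (2 * σ ^ 2)) ≤ σ := by
  rcases le_or_gt u 0 with hu | hu
  · have := Real.exp_pos (-u ^ 2 / (2 * σ ^ 2))
    nlinarith
  · have h1 := Real.add_one_le_exp (u ^ 2 / (2 * σ ^ 2))
    have h2 : Real.exp (-u ^ 2 / (2 * σ ^ 2)) = (Real.exp (u ^ 2 / (2 * σ ^ 2)))⁻¹ := by
      rw [neg_div, Real.exp_neg]
    rw [h2]
    rw [mul_inv_le_iff₀' (Real.exp_pos _)]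
    have h3 : σ * (u ^ 2 / (2 * σ ^ 2) + 1) = u ^ 2 / (2 * σ) + σ := by
      field_simp
    have h5 : u - σ ≤ u ^ 2 / (2 * σ) := by
      rw [le_div_iff₀ (by positivity)]
      nlinarith [sq_nonneg (u - σ)]
    have h6 := mul_le_mul_of_nonneg_left h1 hσ.le
    rw [h3] at h6
    linarith

lemma auxB {σ M u : ℝ} (hσ : 0 < σ) (hM : σ ≤ M) (hu : 0 ≤ u) :
    u * Real.exp (-u ^ 2 / (2 * σ ^ 2)) ≤
      M * Real.exp (-u ^ 2 / (2 * σ ^ 2)) + M * Real.exp (-M ^ 2 / (2 * σ ^ 2)) := by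
  have hE : (0:ℝ) < Real.exp (-u ^ 2 / (2 * σ ^ 2)) := Real.exp_pos _
  rcases le_or_gt u M with h | h
  · nlinarith [Real.exp_pos (-M ^ 2 / (2 * σ ^ 2)), hσ.trans_le hM]
  · have hMpos : 0 < M := hσ.trans_le hM
    set w := u - M with hw
    have hwpos : 0 < w := by simp [hw]; linarith
    have key : u ≤ M * Real.exp (w / σ) := by
      have h1 := Real.add_one_le_exp (w / σ)
      have h2 : M * (w / σ + 1) ≥ M + w := by
        rw [ge_iff_le, mul_add, mul_one, add_comm]
        have : w ≤ M * (w / σ) := by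
          rw [mul_div_assoc']
          rw [le_div_iff₀ hσ]
          nlinarith
        linarith
      calc u = M + w := by simp [hw]
        _ ≤ M * (w / σ + 1) := h2
        _ ≤ M * Real.exp (w / σ) := by nlinarith
    have expineq : w / σ + -u ^ 2 / (2 * σ ^ 2) ≤ -M ^ 2 / (2 * σ ^ 2) := by
      have : w / σ ≤ (u ^ 2 - M ^ 2) / (2 * σ ^ 2) := by
        rw [div_le_div_iff₀ hσ (by positivity)]
        have hkey : 0 ≤ σ * w * (u + M - 2 * σ) :=
          mul_nonneg (mul_nonneg hσ.le hwpos.le) (by linarith)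
        rw [hw] at hkey ⊢
        nlinarith [hkey]
      have h4 : (u ^ 2 - M ^ 2) / (2 * σ ^ 2) = u ^ 2 / (2 * σ ^ 2) - M ^ 2 / (2 * σ ^ 2) := by
        ring
      rw [h4] at this
      rw [neg_div, neg_div]
      linarith
    calc u * Real.exp (-u ^ 2 / (2 * σ ^ 2))
        ≤ (M * Real.exp (w / σ)) * Real.exp (-u ^ 2 / (2 * σ ^ 2)) := by
          exact mul_le_mul_of_nonneg_right key hE.le
      _ = M * Real.exp (w / σ + -u ^ 2 / (2 * σ ^ 2)) := by rw [Real.exp_add]; ring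
      _ ≤ M * Real.exp (-M ^ 2 / (2 * σ ^ 2)) := by
          have := Real.exp_le_exp.mpr expineq
          nlinarith
      _ ≤ M * Real.exp (-u ^ 2 / (2 * σ ^ 2)) + M * Real.exp (-M ^ 2 / (2 * σ ^ 2)) := by
          nlinarith

lemma gauss_hasFDerivAt (d : ℕ) {t : ℝ} (ht : t < 1) (x y : EuclideanSpace ℝ (Fin d)) :
    HasFDerivAt (fun z => gaussKernel d t z x)
      (((1 - t)⁻¹ * gaussKernel d t y x) • innerSL ℝ (Real.sqrt t • x - y)) y := by
  have hs : (0:ℝ) < 1 - t := by linarith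
  set b := Real.sqrt t • x with hb
  set c : ℝ := (2 * π * (1 - t)) ^ (-(d : ℝ) / 2) with hcdef
  set k : ℝ := -(2 * (1 - t))⁻¹ with hk
  have hsq : HasFDerivAt (fun z : EuclideanSpace ℝ (Fin d) => ‖z - b‖ ^ 2)
      ((2:ℝ) • innerSL ℝ (y - b)) y := by
    have h1 : HasFDerivAt (fun z : EuclideanSpace ℝ (Fin d) => z - b)
        (ContinuousLinearMap.id ℝ (EuclideanSpace ℝ (Fin d))) y :=
      (hasFDerivAt_id y).sub_const b
    have h2 := h1.inner ℝ h1
    have h3 : (fun z : EuclideanSpace ℝ (Fin d) => ‖z - b‖ ^ 2)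
        = fun z => (inner ℝ (z - b) (z - b) : ℝ) := by
      funext z; rw [real_inner_self_eq_norm_sq]
    rw [h3]
    refine h2.congr_fderiv ?_
    ext v
    simp only [ContinuousLinearMap.smul_apply, ContinuousLinearMap.comp_apply,
      ContinuousLinearMap.prod_apply, ContinuousLinearMap.id_apply, fderivInnerCLM_apply,
      innerSL_apply_apply, smul_eq_mul]
    rw [real_inner_comm v (y - b)]
    ring
  have hexp := ((hsq.mul_const k).exp).const_mul c
  have hfun : (fun z => gaussKernel d t z x)
      = fun z => c * Real.exp (‖z - b‖ ^ 2 * k) := by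
    funext z
    unfold gaussKernel
    rw [hk, ← hcdef, ← hb]
    congr 1
    rw [neg_div, div_eq_mul_inv]
    ring
  rw [hfun]
  refine hexp.congr_fderiv ?_
  ext v
  have hG : gaussKernel d t y x = c * Real.exp (‖y - b‖ ^ 2 * k) := congrFun hfun y
  simp only [ContinuousLinearMap.smul_apply, smul_eq_mul, hG, innerSL_apply_apply]
  rw [show b - y = -(y - b) by abel, inner_neg_left, hk]
  field_simp

lemma gauss_pos (d : ℕ) {t : ℝ} (ht : t < 1) (y x : EuclideanSpace ℝ (Fin d)) :
    0 < gaussKernel d t y x := by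
  have : (0:ℝ) < 1 - t := by linarith
  unfold gaussKernel
  positivity

lemma gauss_le (d : ℕ) {t : ℝ} (ht : t < 1) (y x : EuclideanSpace ℝ (Fin d)) :
    gaussKernel d t y x ≤ (2 * π * (1 - t)) ^ (-(d : ℝ) / 2) := by
  have hs : (0:ℝ) < 1 - t := by linarith
  have hc : (0:ℝ) < (2 * π * (1 - t)) ^ (-(d : ℝ) / 2) := by
    have := Real.pi_pos; positivity
  unfold gaussKernel
  have h1 : Real.exp (-‖y - Real.sqrt t • x‖ ^ 2 / (2 * (1 - t))) ≤ 1 := by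
    apply Real.exp_le_one_iff.mpr
    apply div_nonpos_of_nonpos_of_nonneg
    · simp [sq_nonneg]
    · positivity
  nlinarith

lemma gauss_cont (d : ℕ) (t : ℝ) (y : EuclideanSpace ℝ (Fin d)) :
    Continuous fun x => gaussKernel d t y x := by
  unfold gaussKernel
  fun_prop

set_option maxHeartbeats 1000000 in
set_option synthInstance.maxHeartbeats 400000 in
/-- Key lemma: derivative with norm control and positivity for `z ↦ ∫ f·G_t(z,·)`. -/
lemma key_ratio (d : ℕ) {t : ℝ} (ht0 : 0 < t) (ht1 : t < 1)
    (f : EuclideanSpace ℝ (Fin d) → ℝ) (hfmeas : Measurable f)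
    (hfnn : ∀ x, 0 ≤ f x) (hfint : Integrable f) {R : ℝ} (hR : 0 < R)
    (hmass : (∫ x, f x) / 2 < ∫ x in {x : EuclideanSpace ℝ (Fin d) | ‖x‖ < R}, f x)
    (y : EuclideanSpace ℝ (Fin d)) :
    ∃ q' : EuclideanSpace ℝ (Fin d) →L[ℝ] ℝ,
      HasFDerivAt (fun z => ∫ x, f x * gaussKernel d t z x) q' y ∧
      ‖q'‖ ≤ 3 * ((‖y‖ + Real.sqrt t * R) + Real.sqrt (1 - t)) / (1 - t) *
        ∫ x, f x * gaussKernel d t y x ∧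
      0 < ∫ x, f x * gaussKernel d t y x := by
  have hs : (0:ℝ) < 1 - t := by linarith
  set σ : ℝ := Real.sqrt (1 - t) with hσdef
  have hσ : 0 < σ := Real.sqrt_pos.mpr hs
  have hσ2 : σ ^ 2 = 1 - t := Real.sq_sqrt hs.le
  set c : ℝ := (2 * π * (1 - t)) ^ (-(d : ℝ) / 2) with hcdef
  have hc : 0 < c := by have := Real.pi_pos; positivity
  set τ : ℝ := Real.sqrt t with hτdef
  have hτ : 0 ≤ τ := Real.sqrt_nonneg t
  set a : ℝ := ‖y‖ + τ * R with hadef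
  have ha : 0 ≤ a := by
    rw [hadef]
    exact add_nonneg (norm_nonneg y) (mul_nonneg hτ hR.le)
  set M : ℝ := a + σ with hMdef
  have hMσ : σ ≤ M := by rw [hMdef]; linarith
  have hM : 0 < M := lt_of_lt_of_le hσ hMσ
  set κ : ℝ := c * Real.exp (-a ^ 2 / (2 * (1 - t))) with hκdef
  have hκ : 0 < κ := by rw [hκdef]; positivity
  -- expression of the kernel
  have hGdef : ∀ z x : EuclideanSpace ℝ (Fin d), gaussKernel d t z x
      = c * Real.exp (-‖z - τ • x‖ ^ 2 / (2 * (1 - t))) := fun z x => rfl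
  have hgle : ∀ z x : EuclideanSpace ℝ (Fin d), gaussKernel d t z x ≤ c := by
    intro z x
    rw [hcdef]
    exact gauss_le d ht1 z x
  have hdiff : ∀ (x z : EuclideanSpace ℝ (Fin d)),
      HasFDerivAt (fun z => f x * gaussKernel d t z x)
        (f x • (((1 - t)⁻¹ * gaussKernel d t z x) • innerSL ℝ (τ • x - z))) z :=
    fun x z => (gauss_hasFDerivAt d ht1 x z).const_mul (f x)
  clear_value σ c τ a M κ
  -- integrability of the weighted kernel
  have hmeasG : ∀ z : EuclideanSpace ℝ (Fin d),
      AEStronglyMeasurable (fun x => f x * gaussKernel d t z x) volume :=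
    fun z => (hfmeas.aestronglyMeasurable.mul (gauss_cont d t z).aestronglyMeasurable)
  have hFG : ∀ z : EuclideanSpace ℝ (Fin d),
      Integrable (fun x => f x * gaussKernel d t z x) := by
    intro z
    refine (hfint.const_mul c).mono' (hmeasG z) ?_
    filter_upwards with x
    rw [Real.norm_eq_abs, abs_of_nonneg (mul_nonneg (hfnn x) (gauss_pos d ht1 z x).le)]
    calc f x * gaussKernel d t z x ≤ f x * c :=
          mul_le_mul_of_nonneg_left (hgle z x) (hfnn x)
      _ = c * f x := mul_comm _ _
  -- the set S
  set S : Set (EuclideanSpace ℝ (Fin d)) := {x | ‖x‖ < R} with hSdef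
  have hSmeas : MeasurableSet S := by
    have : IsOpen S := isOpen_lt continuous_norm continuous_const
    exact this.measurableSet
  -- lower bound for the kernel on S
  have hGgeS : ∀ x ∈ S, κ ≤ gaussKernel d t y x := by
    intro x hx
    rw [hGdef, hκdef]
    have hu : ‖y - τ • x‖ ≤ a := by
      calc ‖y - τ • x‖ ≤ ‖y‖ + ‖τ • x‖ := norm_sub_le _ _
        _ = ‖y‖ + τ * ‖x‖ := by rw [norm_smul, Real.norm_eq_abs, abs_of_nonneg hτ]
        _ ≤ ‖y‖ + τ * R := by
            have : ‖x‖ ≤ R := le_of_lt hx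
            nlinarith
        _ = a := hadef.symm
    have hu2 : ‖y - τ • x‖ ^ 2 ≤ a ^ 2 := by nlinarith [norm_nonneg (y - τ • x)]
    have : Real.exp (-a ^ 2 / (2 * (1 - t))) ≤
        Real.exp (-‖y - τ • x‖ ^ 2 / (2 * (1 - t))) := by
      apply Real.exp_le_exp.mpr
      gcongr <;> linarith
    nlinarith
  -- positivity / lower bound of the integral
  have hmassnn : 0 ≤ ∫ x, f x := integral_nonneg hfnn
  have hlow : κ * ((∫ x, f x) / 2) ≤ ∫ x, f x * gaussKernel d t y x := by
    have h1 : ∫ x in S, f x * κ ≤ ∫ x in S, f x * gaussKernel d t y x := by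
      apply setIntegral_mono_on ((hfint.mul_const κ).integrableOn)
        ((hFG y).integrableOn) hSmeas
      intro x hx
      exact mul_le_mul_of_nonneg_left (hGgeS x hx) (hfnn x)
    have h2 : ∫ x in S, f x * κ = (∫ x in S, f x) * κ := integral_mul_const κ f
    have h3 : ∫ x in S, f x * gaussKernel d t y x ≤ ∫ x, f x * gaussKernel d t y x := by
      apply setIntegral_le_integral (hFG y)
      filter_upwards with x
      exact mul_nonneg (hfnn x) (gauss_pos d ht1 y x).le
    nlinarith [hmass]
  have hql : κ * ((∫ x, f x) / 2) ≤ ∫ x, f x * gaussKernel d t y x := hlow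
  have hmasspos : 0 < ∫ x, f x := by
    by_contra h
    push_neg at h
    have h0 : ∫ x, f x = 0 := le_antisymm h hmassnn
    rw [h0] at hmass
    have : ∫ x in S, f x ≤ 0 := by
      rw [← h0]
      exact setIntegral_le_integral hfint (Filter.Eventually.of_forall hfnn)
    simp at hmass
    linarith
  have hqpos : 0 < ∫ x, f x * gaussKernel d t y x := by nlinarith
  -- pointwise tail bound
  have hPt : ∀ x, gaussKernel d t y x * ‖y - τ • x‖ ≤
      M * gaussKernel d t y x + c * (M * Real.exp (-M ^ 2 / (2 * (1 - t)))) := by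
    intro x
    have h := auxB (u := ‖y - τ • x‖) hσ hMσ (norm_nonneg _)
    rw [hσ2] at h
    rw [hGdef]
    have h2 := mul_le_mul_of_nonneg_left h hc.le
    calc c * Real.exp (-‖y - τ • x‖ ^ 2 / (2 * (1 - t))) * ‖y - τ • x‖
        = c * (‖y - τ • x‖ * Real.exp (-‖y - τ • x‖ ^ 2 / (2 * (1 - t)))) := by ring
      _ ≤ c * (M * Real.exp (-‖y - τ • x‖ ^ 2 / (2 * (1 - t)))
            + M * Real.exp (-M ^ 2 / (2 * (1 - t)))) := h2
      _ = M * (c * Real.exp (-‖y - τ • x‖ ^ 2 / (2 * (1 - t))))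
            + c * (M * Real.exp (-M ^ 2 / (2 * (1 - t)))) := by ring
  have hcM : c * Real.exp (-M ^ 2 / (2 * (1 - t))) ≤ κ := by
    rw [hκdef]
    have hM2 : a ^ 2 ≤ M ^ 2 := by nlinarith
    have hE : Real.exp (-M ^ 2 / (2 * (1 - t))) ≤ Real.exp (-a ^ 2 / (2 * (1 - t))) := by
      apply Real.exp_le_exp.mpr
      gcongr <;> linarith
    exact mul_le_mul_of_nonneg_left hE hc.le
  -- tail integral bound
  have hIq : ∫ x, f x * (gaussKernel d t y x * ‖y - τ • x‖) ≤
      3 * M * ∫ x, f x * gaussKernel d t y x := by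
    have hbint : Integrable (fun x => M * (f x * gaussKernel d t y x)
        + (c * (M * Real.exp (-M ^ 2 / (2 * (1 - t))))) * f x) :=
      ((hFG y).const_mul M).add (hfint.const_mul _)
    have h1 : ∫ x, f x * (gaussKernel d t y x * ‖y - τ • x‖) ≤
        ∫ x, (M * (f x * gaussKernel d t y x)
          + (c * (M * Real.exp (-M ^ 2 / (2 * (1 - t))))) * f x) := by
      refine integral_mono_of_nonneg (Filter.Eventually.of_forall fun x => ?_) hbint
        (Filter.Eventually.of_forall fun x => ?_)
      · exact mul_nonneg (hfnn x) (mul_nonneg (gauss_pos d ht1 y x).le (norm_nonneg (y - τ • x)))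
      · have h := mul_le_mul_of_nonneg_left (hPt x) (hfnn x)
        calc f x * (gaussKernel d t y x * ‖y - τ • x‖)
            ≤ f x * (M * gaussKernel d t y x
                + c * (M * Real.exp (-M ^ 2 / (2 * (1 - t))))) := h
          _ = M * (f x * gaussKernel d t y x)
                + (c * (M * Real.exp (-M ^ 2 / (2 * (1 - t))))) * f x := by ring
    have h2 : ∫ x, (M * (f x * gaussKernel d t y x)
          + (c * (M * Real.exp (-M ^ 2 / (2 * (1 - t))))) * f x)
        = M * (∫ x, f x * gaussKernel d t y x)
          + (c * (M * Real.exp (-M ^ 2 / (2 * (1 - t))))) * ∫ x, f x := by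
      rw [integral_add ((hFG y).const_mul M) (hfint.const_mul _),
        integral_const_mul, integral_const_mul]
    have h3 : (c * (M * Real.exp (-M ^ 2 / (2 * (1 - t))))) * ∫ x, f x
        ≤ 2 * M * ∫ x, f x * gaussKernel d t y x := by
      have hstep : (c * (M * Real.exp (-M ^ 2 / (2 * (1 - t))))) * ∫ x, f x
          ≤ M * κ * ∫ x, f x := by
        calc (c * (M * Real.exp (-M ^ 2 / (2 * (1 - t))))) * ∫ x, f x
            = M * (c * Real.exp (-M ^ 2 / (2 * (1 - t)))) * ∫ x, f x := by ring
          _ ≤ M * κ * ∫ x, f x :=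
              mul_le_mul_of_nonneg_right
                (mul_le_mul_of_nonneg_left hcM hM.le) hmassnn
      have hstep2 : M * κ * ∫ x, f x ≤ 2 * M * ∫ x, f x * gaussKernel d t y x := by
        calc M * κ * ∫ x, f x = 2 * M * (κ * ((∫ x, f x) / 2)) := by ring
          _ ≤ 2 * M * ∫ x, f x * gaussKernel d t y x := by
              have h := mul_le_mul_of_nonneg_left hlow (by linarith : (0:ℝ) ≤ 2 * M)
              linarith
      linarith
    rw [h2] at h1
    linarith
  have hCLMnorm : ∀ (β : ℝ) (L : EuclideanSpace ℝ (Fin d) →L[ℝ] ℝ), ‖β • L‖ = |β| * ‖L‖ := by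
    intro β L
    rw [show |β| = ‖β‖ from rfl]
    exact norm_smul β L
  set Kb : ℝ := (1 - t)⁻¹ * c * σ with hKbdef
  have hDnorm : ∀ (z x : EuclideanSpace ℝ (Fin d)),
      ‖((1 - t)⁻¹ * gaussKernel d t z x) • innerSL ℝ (τ • x - z)‖
        = (1 - t)⁻¹ * gaussKernel d t z x * ‖z - τ • x‖ := by
    intro z x
    rw [hCLMnorm, innerSL_apply_norm,
      abs_of_nonneg (mul_nonneg (by positivity) (gauss_pos d ht1 z x).le), norm_sub_rev]
  have hDle : ∀ (z x : EuclideanSpace ℝ (Fin d)),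
      ‖((1 - t)⁻¹ * gaussKernel d t z x) • innerSL ℝ (τ • x - z)‖ ≤ Kb := by
    intro z x
    rw [hDnorm]
    have h := auxA (u := ‖z - τ • x‖) hσ
    rw [hσ2] at h
    rw [hGdef]
    have : (1 - t)⁻¹ * (c * Real.exp (-‖z - τ • x‖ ^ 2 / (2 * (1 - t)))) * ‖z - τ • x‖
        = (1 - t)⁻¹ * c * (‖z - τ • x‖ * Real.exp (-‖z - τ • x‖ ^ 2 / (2 * (1 - t)))) := by
      ring
    rw [this, hKbdef]
    have hpos : (0:ℝ) ≤ (1 - t)⁻¹ * c := by positivity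
    exact mul_le_mul_of_nonneg_left h hpos
  have hq' : HasFDerivAt (fun z => ∫ x, f x * gaussKernel d t z x)
      (∫ x, f x • (((1 - t)⁻¹ * gaussKernel d t y x) • innerSL ℝ (τ • x - y))) y := by
    apply hasFDerivAt_integral_of_dominated_of_fderiv_le
      (F' := fun z x => f x • (((1 - t)⁻¹ * gaussKernel d t z x) • innerSL ℝ (τ • x - z)))
      (bound := fun x => Kb * f x) (s := Metric.ball y 1) (Metric.ball_mem_nhds y one_pos)
    · exact Filter.Eventually.of_forall (fun z => hmeasG z)
    · exact hFG y
    · apply AEStronglyMeasurable.smul hfmeas.aestronglyMeasurable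
      apply Continuous.aestronglyMeasurable
      exact (continuous_const.mul (gauss_cont d t y)).smul
        ((innerSL ℝ).continuous.comp
          (by fun_prop : Continuous fun x : EuclideanSpace ℝ (Fin d) => τ • x - y))
    · filter_upwards with x
      intro z hz
      rw [hCLMnorm, abs_of_nonneg (hfnn x)]
      calc f x * ‖((1 - t)⁻¹ * gaussKernel d t z x) • innerSL ℝ (τ • x - z)‖
          ≤ f x * Kb := mul_le_mul_of_nonneg_left (hDle z x) (hfnn x)
        _ = Kb * f x := mul_comm _ _
    · exact hfint.const_mul Kb
    · filter_upwards with x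
      intro z hz
      exact hdiff x z
  refine ⟨_, hq', ?_, hqpos⟩
  have hnorm1 : ‖∫ x, f x • (((1 - t)⁻¹ * gaussKernel d t y x) • innerSL ℝ (τ • x - y))‖
      ≤ ∫ x, f x * ((1 - t)⁻¹ * gaussKernel d t y x * ‖y - τ • x‖) := by
    calc ‖∫ x, f x • (((1 - t)⁻¹ * gaussKernel d t y x) • innerSL ℝ (τ • x - y))‖
        ≤ ∫ x, ‖f x • (((1 - t)⁻¹ * gaussKernel d t y x) • innerSL ℝ (τ • x - y))‖ :=
          norm_integral_le_integral_norm _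
      _ = ∫ x, f x * ((1 - t)⁻¹ * gaussKernel d t y x * ‖y - τ • x‖) := by
          congr 1
          funext x
          rw [hCLMnorm, abs_of_nonneg (hfnn x), hDnorm]
  have hnorm2 : ∫ x, f x * ((1 - t)⁻¹ * gaussKernel d t y x * ‖y - τ • x‖)
      = (1 - t)⁻¹ * ∫ x, f x * (gaussKernel d t y x * ‖y - τ • x‖) := by
    rw [← integral_const_mul]
    congr 1
    funext x
    ring
  rw [hnorm2] at hnorm1
  calc ‖∫ x, f x • (((1 - t)⁻¹ * gaussKernel d t y x) • innerSL ℝ (τ • x - y))‖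
      ≤ (1 - t)⁻¹ * ∫ x, f x * (gaussKernel d t y x * ‖y - τ • x‖) := hnorm1
    _ ≤ (1 - t)⁻¹ * (3 * M * ∫ x, f x * gaussKernel d t y x) :=
        mul_le_mul_of_nonneg_left hIq (by positivity)
    _ = 3 * M / (1 - t) * ∫ x, f x * gaussKernel d t y x := by
        rw [div_eq_mul_inv]
        ring

set_option maxHeartbeats 1000000 in
set_option synthInstance.maxHeartbeats 400000 in
/-- Universal bound on the gradient of the conditional reward:
`‖∇ρ_t(y)‖ ≤ C·ρ_t(y)·((‖y‖+√t·R)/(1−t) + d/√(1−t))` under half-mass conditions on both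
`p₀` and the reward-reweighted density `p₀^r`. -/
theorem stmt_10 :
    ∃ C : ℝ, 0 < C ∧
      ∀ (d : ℕ), 1 ≤ d →
      ∀ p₀ r : EuclideanSpace ℝ (Fin d) → ℝ,
        IsDensity p₀ → Measurable r → (∀ x, 0 ≤ r x) →
        (0 < ∫ x, r x * p₀ x) → Integrable (fun x => r x * p₀ x) →
      ∀ R : ℝ, 0 < R →
        (1 / 2 < ∫ x in {x : EuclideanSpace ℝ (Fin d) | ‖x‖ < R}, p₀ x) →
        (1 / 2 < ∫ x in {x : EuclideanSpace ℝ (Fin d) | ‖x‖ < R}, reweighted d p₀ r x) →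
      ∀ t : ℝ, t ∈ Set.Ioo (0 : ℝ) 1 →
      ∀ y : EuclideanSpace ℝ (Fin d),
        ‖gradient (fun z => condReward d p₀ r t z) y‖ ≤
          C * condReward d p₀ r t y *
            ((‖y‖ + Real.sqrt t * R) / (1 - t) + d / Real.sqrt (1 - t)) := by
  refine ⟨6, by norm_num, ?_⟩
  intro d hd p₀ r hp₀ hrmeas hrnn hTpos hrp₀int R hR hmass hmassr t ht y
  obtain ⟨hp₀meas, hp₀nn, hp₀one⟩ := hp₀
  obtain ⟨ht0, ht1⟩ := ht
  have hs : (0:ℝ) < 1 - t := by linarith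
  have hσ : (0:ℝ) < Real.sqrt (1 - t) := Real.sqrt_pos.mpr hs
  have hσ2 : Real.sqrt (1 - t) ^ 2 = 1 - t := Real.sq_sqrt hs.le
  have hp₀int : Integrable p₀ := by
    by_contra h
    rw [integral_undef h] at hp₀one
    norm_num at hp₀one
  have hmass' : (∫ x, p₀ x) / 2 < ∫ x in {x : EuclideanSpace ℝ (Fin d) | ‖x‖ < R}, p₀ x := by
    rw [hp₀one]
    linarith
  obtain ⟨q', hq', hq'norm, hqpos⟩ := key_ratio d ht0 ht1 p₀ hp₀meas hp₀nn hp₀int hR hmass' y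
  have hfmeas : Measurable fun x => r x * p₀ x := hrmeas.mul hp₀meas
  have hfnn : ∀ x, 0 ≤ r x * p₀ x := fun x => mul_nonneg (hrnn x) (hp₀nn x)
  have hmassr' : (∫ x, r x * p₀ x) / 2
      < ∫ x in {x : EuclideanSpace ℝ (Fin d) | ‖x‖ < R}, r x * p₀ x := by
    have h1 : ∫ x in {x : EuclideanSpace ℝ (Fin d) | ‖x‖ < R}, reweighted d p₀ r x
        = (∫ x in {x : EuclideanSpace ℝ (Fin d) | ‖x‖ < R}, r x * p₀ x)
          / ∫ x', r x' * p₀ x' := by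
      simp only [reweighted]
      exact integral_div _ _
    rw [h1, lt_div_iff₀ hTpos] at hmassr
    linarith
  obtain ⟨N', hN', hN'norm, hNpos⟩ :=
    key_ratio d ht0 ht1 (fun x => r x * p₀ x) hfmeas hfnn hrp₀int hR hmassr' y
  -- rewrite the conditional reward as a ratio
  have hρeq : (fun z => condReward d p₀ r t z)
      = fun z => (∫ x, r x * p₀ x * gaussKernel d t z x)
          / ∫ x, p₀ x * gaussKernel d t z x := by
    funext z
    unfold condReward post smoothed
    rw [← integral_div]
    congr 1
    funext x
    ring
  have hρy : condReward d p₀ r t y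
      = (∫ x, r x * p₀ x * gaussKernel d t y x) / ∫ x, p₀ x * gaussKernel d t y x :=
    congrFun hρeq y
  have hqne : (∫ x, p₀ x * gaussKernel d t y x) ≠ 0 := ne_of_gt hqpos
  have hinv : HasFDerivAt (fun z => (∫ x, p₀ x * gaussKernel d t z x)⁻¹)
      ((-((∫ x, p₀ x * gaussKernel d t y x) ^ 2)⁻¹) • q') y :=
    (hasDerivAt_inv hqne).comp_hasFDerivAt y hq'
  have hmul := hN'.mul hinv
  have hρ' : HasFDerivAt (fun z => condReward d p₀ r t z)
      ((∫ x, r x * p₀ x * gaussKernel d t y x) •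
          ((-((∫ x, p₀ x * gaussKernel d t y x) ^ 2)⁻¹) • q')
        + (∫ x, p₀ x * gaussKernel d t y x)⁻¹ • N') y := by
    rw [hρeq]
    simp only [div_eq_mul_inv]
    exact hmul
  have hCLMnorm : ∀ (β : ℝ) (L : EuclideanSpace ℝ (Fin d) →L[ℝ] ℝ), ‖β • L‖ = |β| * ‖L‖ := by
    intro β L
    rw [show |β| = ‖β‖ from rfl]
    exact norm_smul β L
  have hgrad : ‖gradient (fun z => condReward d p₀ r t z) y‖
      = ‖(∫ x, r x * p₀ x * gaussKernel d t y x) •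
          ((-((∫ x, p₀ x * gaussKernel d t y x) ^ 2)⁻¹) • q')
        + (∫ x, p₀ x * gaussKernel d t y x)⁻¹ • N'‖ := by
    rw [gradient, hρ'.fderiv]
    exact LinearIsometryEquiv.norm_map _ _
  rw [hgrad]
  -- abbreviations
  set Ny : ℝ := ∫ x, r x * p₀ x * gaussKernel d t y x with hNydef
  set Qy : ℝ := ∫ x, p₀ x * gaussKernel d t y x with hQydef
  set B : ℝ := 3 * ((‖y‖ + Real.sqrt t * R) + Real.sqrt (1 - t)) / (1 - t) with hBdef
  have hBnn : 0 ≤ B := by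
    rw [hBdef]
    have h1 : (0:ℝ) ≤ ‖y‖ + Real.sqrt t * R :=
      add_nonneg (norm_nonneg y) (mul_nonneg (Real.sqrt_nonneg t) hR.le)
    positivity
  clear_value Ny Qy B
  -- norm bound on the derivative
  have hbound : ‖Ny • ((-(Qy ^ 2)⁻¹) • q') + Qy⁻¹ • N'‖ ≤ 2 * B * (Ny / Qy) := by
    have h1 : ‖Ny • ((-(Qy ^ 2)⁻¹) • q')‖ ≤ B * (Ny / Qy) := by
      rw [hCLMnorm, hCLMnorm, abs_of_nonneg hNpos.le, abs_neg, abs_of_nonneg (by positivity)]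
      have h2 : ‖q'‖ ≤ B * Qy := hq'norm
      calc Ny * ((Qy ^ 2)⁻¹ * ‖q'‖) ≤ Ny * ((Qy ^ 2)⁻¹ * (B * Qy)) := by
            apply mul_le_mul_of_nonneg_left ?_ hNpos.le
            exact mul_le_mul_of_nonneg_left h2 (by positivity)
        _ = B * (Ny / Qy) := by
            field_simp
    have h3 : ‖Qy⁻¹ • N'‖ ≤ B * (Ny / Qy) := by
      rw [hCLMnorm, abs_of_nonneg (by positivity)]
      calc Qy⁻¹ * ‖N'‖ ≤ Qy⁻¹ * (B * Ny) :=
            mul_le_mul_of_nonneg_left hN'norm (by positivity)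
        _ = B * (Ny / Qy) := by
            field_simp
    calc ‖Ny • ((-(Qy ^ 2)⁻¹) • q') + Qy⁻¹ • N'‖
        ≤ ‖Ny • ((-(Qy ^ 2)⁻¹) • q')‖ + ‖Qy⁻¹ • N'‖ := norm_add_le _ _
      _ ≤ B * (Ny / Qy) + B * (Ny / Qy) := add_le_add h1 h3
      _ = 2 * B * (Ny / Qy) := by ring
  have hρpos : 0 < Ny / Qy := div_pos hNpos hqpos
  have hfinal : 2 * B * (Ny / Qy) ≤ 6 * (Ny / Qy) *
      ((‖y‖ + Real.sqrt t * R) / (1 - t) + d / Real.sqrt (1 - t)) := by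
    have hB2 : 2 * B ≤ 6 * ((‖y‖ + Real.sqrt t * R) / (1 - t) + d / Real.sqrt (1 - t)) := by
      rw [hBdef]
      have hσs : Real.sqrt (1 - t) / (1 - t) = 1 / Real.sqrt (1 - t) := by
        rw [← hσ2]
        field_simp
        rw [Real.sqrt_sq hσ.le]
      have hd1 : 1 / Real.sqrt (1 - t) ≤ d / Real.sqrt (1 - t) := by
        apply div_le_div_of_nonneg_right ?_ hσ.le
        · exact_mod_cast hd
      have hsplit : 2 * (3 * ((‖y‖ + Real.sqrt t * R) + Real.sqrt (1 - t)) / (1 - t))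
          = 6 * ((‖y‖ + Real.sqrt t * R) / (1 - t) + Real.sqrt (1 - t) / (1 - t)) := by
        field_simp
        ring
      rw [hsplit, hσs]
      have := mul_le_mul_of_nonneg_left hd1 (by norm_num : (0:ℝ) ≤ 6)
      nlinarith [hd1]
    calc 2 * B * (Ny / Qy)
        ≤ 6 * ((‖y‖ + Real.sqrt t * R) / (1 - t) + d / Real.sqrt (1 - t)) * (Ny / Qy) :=
          mul_le_mul_of_nonneg_right hB2 hρpos.le
      _ = 6 * (Ny / Qy) * ((‖y‖ + Real.sqrt t * R) / (1 - t) + d / Real.sqrt (1 - t)) := by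
          ring
  rw [hρy]
  calc ‖Ny • ((-(Qy ^ 2)⁻¹) • q') + Qy⁻¹ • N'‖ ≤ 2 * B * (Ny / Qy) := hbound
    _ ≤ 6 * (Ny / Qy) * ((‖y‖ + Real.sqrt t * R) / (1 - t) + d / Real.sqrt (1 - t)) := hfinal
end

section
/- There exists a universal constant C > 0 with the following property. For every integer d ≥ 1, every probability density p₀ on ℝ^d, every measurable r : ℝ^d → [0,∞) with 0 < ∫ r(x) p₀(x) dx < ∞, every R > 0 with ∫_{‖x‖₂ < R} p₀^r(x) dx > 1/2, every t ∈ (0,1), and every y ∈ ℝ^d, the first absolute moment of the reweighted posterior satisfies ∫_{ℝ^d} (‖y − √t·x‖₂/(1−t)) · π_t^r(x|y) dx ≤ C·( (‖y‖₂ + √t·R)/(1−t) + d/√(1−t) ). -/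
open MeasureTheory Real

lemma key_exp (s a u : ℝ) (hs : 0 < s) (ha : 0 ≤ a) (hu : 2*a + 3*Real.sqrt s ≤ u) :
    u / Real.sqrt s * Real.exp ((a^2 - u^2)/(2*s)) ≤ 1 := by
  have hsq : 0 < Real.sqrt s := Real.sqrt_pos.mpr hs
  have h1 : Real.sqrt s * Real.sqrt s = s := Real.mul_self_sqrt hs.le
  have hu3 : 3*Real.sqrt s ≤ u := by linarith
  have hu0 : 0 < u := by linarith
  have h3 : a^2 ≤ u^2/4 := by nlinarith
  have h4 : (a^2 - u^2)/(2*s) ≤ -((3*u^2)/(8*s)) := by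
    rw [show (a^2 - u^2)/(2*s) = (4*(a^2-u^2))/(8*s) by ring,
      show -((3*u^2)/(8*s)) = (-(3*u^2))/(8*s) by ring]
    gcongr ?_ / (8*s)
    linarith
  have h5 : Real.exp ((a^2-u^2)/(2*s)) ≤ Real.exp (-((3*u^2)/(8*s))) := Real.exp_le_exp.mpr h4
  have hx : (0:ℝ) < (3*u^2)/(8*s) := by positivity
  have h7 : (3*u^2)/(8*s) ≤ Real.exp ((3*u^2)/(8*s)) := by
    linarith [Real.add_one_le_exp ((3*u^2)/(8*s))]
  have h6 : Real.exp (-((3*u^2)/(8*s))) ≤ (8*s)/(3*u^2) := by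
    rw [Real.exp_neg]
    calc (Real.exp ((3*u^2)/(8*s)))⁻¹ ≤ ((3*u^2)/(8*s))⁻¹ := inv_anti₀ hx h7
      _ = (8*s)/(3*u^2) := by rw [inv_div]
  calc u / Real.sqrt s * Real.exp ((a^2 - u^2)/(2*s))
      ≤ u / Real.sqrt s * ((8*s)/(3*u^2)) := by
        apply mul_le_mul_of_nonneg_left (h5.trans h6) (by positivity)
    _ ≤ 1 := by
        rw [div_mul_div_comm, div_le_one (by positivity)]
        nlinarith [mul_le_mul_of_nonneg_left hu3 (mul_nonneg hsq.le hu0.le), h1,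
          mul_pos hs hu0]

/-- Universal first-moment bound for the reweighted posterior:
`∫ (‖y − √t·x‖/(1−t))·π_t^r(x|y) dx ≤ C·((‖y‖+√t·R)/(1−t) + d/√(1−t))` whenever
`∫_{‖x‖<R} p₀^r > 1/2`. -/
theorem stmt_11 :
    ∃ C : ℝ, 0 < C ∧
      ∀ (d : ℕ), 1 ≤ d →
      ∀ p₀ r : EuclideanSpace ℝ (Fin d) → ℝ,
        IsDensity p₀ → Measurable r → (∀ x, 0 ≤ r x) →
        (0 < ∫ x, r x * p₀ x) → Integrable (fun x => r x * p₀ x) →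
      ∀ R : ℝ, 0 < R →
        (1 / 2 < ∫ x in {x : EuclideanSpace ℝ (Fin d) | ‖x‖ < R}, reweighted d p₀ r x) →
      ∀ t : ℝ, t ∈ Set.Ioo (0 : ℝ) 1 →
      ∀ y : EuclideanSpace ℝ (Fin d),
        (∫ x, (‖y - Real.sqrt t • x‖ / (1 - t)) * post d (reweighted d p₀ r) t x y) ≤
          C * ((‖y‖ + Real.sqrt t * R) / (1 - t) + d / Real.sqrt (1 - t)) := by
  refine ⟨5, by norm_num, ?_⟩
  intro d hd p₀ r hp₀ hrm hrnn hZ hrint R hR hmass t ht y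
  obtain ⟨hp₀m, hp₀nn, hp₀1⟩ := hp₀
  obtain ⟨ht0, ht1⟩ := ht
  set s : ℝ := 1 - t with hs_def
  have hs : 0 < s := by simp only [hs_def]; linarith
  have hsq : 0 < Real.sqrt s := Real.sqrt_pos.mpr hs
  have h1 : Real.sqrt s * Real.sqrt s = s := Real.mul_self_sqrt hs.le
  have hst : 0 ≤ Real.sqrt t := Real.sqrt_nonneg t
  set p : EuclideanSpace ℝ (Fin d) → ℝ := reweighted d p₀ r with hp_def
  have hpnn : ∀ x, 0 ≤ p x := fun x =>
    div_nonneg (mul_nonneg (hrnn x) (hp₀nn x)) hZ.le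
  have hpm : Measurable p := (hrm.mul hp₀m).div_const _
  have hp_int : Integrable p := hrint.div_const _
  have hp1 : ∫ x, p x = 1 := by
    simp only [hp_def, reweighted]
    rw [integral_div, div_self hZ.ne']
  -- Gaussian constants
  set c : ℝ := (2 * π * s) ^ (-(d : ℝ) / 2) with hc_def
  have hc : 0 < c := by
    apply Real.rpow_pos_of_pos
    have := Real.pi_pos
    positivity
  have hGeq : ∀ x : EuclideanSpace ℝ (Fin d),
      gaussKernel d t y x = c * Real.exp (-‖y - Real.sqrt t • x‖ ^ 2 / (2 * s)) :=
    fun x => rfl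
  have hG_nonneg : ∀ x, 0 ≤ gaussKernel d t y x := by
    intro x; rw [hGeq x]; positivity
  have hG_le : ∀ x, gaussKernel d t y x ≤ c := by
    intro x; rw [hGeq x]
    nth_rewrite 2 [show c = c * 1 by ring]
    apply mul_le_mul_of_nonneg_left _ hc.le
    rw [Real.exp_le_one_iff]
    have : (0:ℝ) ≤ ‖y - Real.sqrt t • x‖ ^ 2 := by positivity
    rw [neg_div]
    simp only [Left.neg_nonpos_iff]
    positivity
  have hG_cont : Continuous (fun x : EuclideanSpace ℝ (Fin d) => gaussKernel d t y x) := by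
    simp only [hGeq]
    fun_prop
  -- integrability of p * G
  have hpG_int : Integrable (fun x => p x * gaussKernel d t y x) := by
    apply Integrable.mono' (hp_int.const_mul c)
      ((hpm.mul hG_cont.measurable).aestronglyMeasurable)
    filter_upwards with x
    show ‖p x * gaussKernel d t y x‖ ≤ c * p x
    rw [Real.norm_of_nonneg (mul_nonneg (hpnn x) (hG_nonneg x)), mul_comm c]
    exact mul_le_mul_of_nonneg_left (hG_le x) (hpnn x)
  set q : ℝ := smoothed d p t y with hq_def
  have hq_eq : q = ∫ x, p x * gaussKernel d t y x := rfl
  -- lower bound on q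
  set a : ℝ := ‖y‖ + Real.sqrt t * R with ha_def
  have ha : 0 ≤ a := add_nonneg (norm_nonneg y) (mul_nonneg hst hR.le)
  set S : Set (EuclideanSpace ℝ (Fin d)) := {x | ‖x‖ < R} with hS_def
  have hSmeas : MeasurableSet S := (isOpen_lt continuous_norm continuous_const).measurableSet
  have hGx_lb : ∀ x ∈ S, c * Real.exp (-(a^2) / (2 * s)) ≤ gaussKernel d t y x := by
    intro x hx
    have hx' : ‖x‖ < R := hx
    rw [hGeq x]
    apply mul_le_mul_of_nonneg_left _ hc.le
    apply Real.exp_le_exp.mpr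
    rw [neg_div, neg_div, neg_le_neg_iff]
    have h2s : (0:ℝ) < 2 * s := by linarith
    have hxu : ‖y - Real.sqrt t • x‖ ≤ a := by
      calc ‖y - Real.sqrt t • x‖ ≤ ‖y‖ + ‖Real.sqrt t • x‖ := norm_sub_le _ _
        _ = ‖y‖ + Real.sqrt t * ‖x‖ := by rw [norm_smul, Real.norm_of_nonneg hst]
        _ ≤ a := by
            rw [ha_def]
            have := hx'.le
            nlinarith [Real.sqrt_nonneg t]
    gcongr ?_ / (2*s)
    nlinarith [norm_nonneg (y - Real.sqrt t • x)]
  have hq_lb : c * Real.exp (-(a^2) / (2 * s)) / 2 < q := by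
    have step1 : ∫ x in S, (c * Real.exp (-(a^2) / (2 * s))) * p x ≤
        ∫ x in S, p x * gaussKernel d t y x := by
      apply setIntegral_mono_on ((hp_int.const_mul _).integrableOn)
        (hpG_int.integrableOn) hSmeas
      intro x hx
      rw [mul_comm]
      exact mul_le_mul_of_nonneg_left (hGx_lb x hx) (hpnn x)
    have step2 : ∫ x in S, p x * gaussKernel d t y x ≤ q := by
      rw [hq_eq]
      apply setIntegral_le_integral hpG_int
      filter_upwards with x
      exact mul_nonneg (hpnn x) (hG_nonneg x)
    have step0 : c * Real.exp (-(a^2) / (2 * s)) / 2 <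
        ∫ x in S, (c * Real.exp (-(a^2) / (2 * s))) * p x := by
      rw [integral_const_mul]
      have h2 : (1:ℝ)/2 < ∫ x in S, p x := hmass
      have hcp : (0:ℝ) < c * Real.exp (-(a^2) / (2 * s)) := by positivity
      calc c * Real.exp (-(a^2) / (2 * s)) / 2
          = c * Real.exp (-(a^2) / (2 * s)) * (1/2) := by ring
        _ < c * Real.exp (-(a^2) / (2 * s)) * ∫ x in S, p x := by
            exact mul_lt_mul_of_pos_left h2 hcp
    linarith
  have hq_pos : 0 < q := lt_trans (by positivity) hq_lb
  -- posterior facts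
  have hpost_eq : ∀ x, post d p t x y = p x * gaussKernel d t y x / q := fun x => rfl
  have hpost_nonneg : ∀ x, 0 ≤ post d p t x y := fun x => by
    rw [hpost_eq x]; exact div_nonneg (mul_nonneg (hpnn x) (hG_nonneg x)) hq_pos.le
  have hpost_int : Integrable (fun x => post d p t x y) := by
    simp only [hpost_eq]
    exact hpG_int.div_const q
  have hpost1 : ∫ x, post d p t x y = 1 := by
    simp only [hpost_eq]
    rw [integral_div, ← hq_eq, div_self hq_pos.ne']
  clear_value s p c q a S
  -- key pointwise bound
  set M : ℝ := 2 * a + 3 * Real.sqrt s with hM_def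
  have hM0 : 0 ≤ M := by positivity
  have key : ∀ x, (‖y - Real.sqrt t • x‖ / s) * post d p t x y ≤
      (M / s) * post d p t x y + (2 / Real.sqrt s) * p x := by
    intro x
    set u : ℝ := ‖y - Real.sqrt t • x‖ with hu_def
    have hu0 : 0 ≤ u := norm_nonneg _
    rcases le_or_gt u M with hcase | hcase
    · have h2 : (0:ℝ) ≤ (2 / Real.sqrt s) * p x :=
        mul_nonneg (by positivity) (hpnn x)
      have : u / s * post d p t x y ≤ M / s * post d p t x y := by
        apply mul_le_mul_of_nonneg_right _ (hpost_nonneg x)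
        gcongr ?_ / s
      linarith
    · have hge : (0:ℝ) ≤ M / s * post d p t x y :=
        mul_nonneg (by positivity) (hpost_nonneg x)
      have main : u / s * post d p t x y ≤ (2 / Real.sqrt s) * p x := by
        rw [hpost_eq x]
        have hq0le : c * Real.exp (-(a^2) / (2 * s)) / 2 ≤ q := hq_lb.le
        have hq0pos : (0:ℝ) < c * Real.exp (-(a^2) / (2 * s)) / 2 := by positivity
        calc u / s * (p x * gaussKernel d t y x / q)
            = p x * (u / s * gaussKernel d t y x / q) := by ring
          _ ≤ p x * (u / s * gaussKernel d t y x / (c * Real.exp (-(a^2) / (2 * s)) / 2)) := by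
              apply mul_le_mul_of_nonneg_left _ (hpnn x)
              apply div_le_div_of_nonneg_left _ hq0pos hq0le
              exact mul_nonneg (div_nonneg hu0 hs.le) (hG_nonneg x)
          _ = (2 / Real.sqrt s) * p x * (u / Real.sqrt s * Real.exp ((a^2 - u^2) / (2 * s))) := by
              rw [hGeq x, ← hu_def]
              rw [show (a^2 - u^2) / (2*s) = -u^2/(2*s) - (-(a^2)/(2*s)) by ring,
                Real.exp_sub]
              have hB := Real.exp_pos (-(a^2)/(2*s))
              have hA := Real.exp_pos (-u^2/(2*s))
              field_simp
              linear_combination (p x * u) * h1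
          _ ≤ (2 / Real.sqrt s) * p x * 1 := by
              apply mul_le_mul_of_nonneg_left _ (mul_nonneg (by positivity) (hpnn x))
              exact key_exp s a u hs ha hcase.le
          _ = (2 / Real.sqrt s) * p x := by ring
      linarith
  -- integrability of LHS integrand
  have hbound_int : Integrable (fun x =>
      (M / s) * post d p t x y + (2 / Real.sqrt s) * p x) :=
    (hpost_int.const_mul _).add (hp_int.const_mul _)
  have hF_int : Integrable (fun x => (‖y - Real.sqrt t • x‖ / s) * post d p t x y) := by
    apply Integrable.mono' hbound_int
    · apply Measurable.aestronglyMeasurable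
      apply Measurable.mul
      · exact ((continuous_const.sub (continuous_const_smul _)).norm.measurable).div_const _
      · simp only [hpost_eq]
        exact ((hpm.mul hG_cont.measurable).div_const _)
    · filter_upwards with x
      rw [Real.norm_of_nonneg (mul_nonneg (div_nonneg (norm_nonneg _) hs.le) (hpost_nonneg x))]
      exact key x
  -- integrate
  have hInt_le : (∫ x, (‖y - Real.sqrt t • x‖ / s) * post d p t x y) ≤ M / s + 2 / Real.sqrt s := by
    calc (∫ x, (‖y - Real.sqrt t • x‖ / s) * post d p t x y)
        ≤ ∫ x, ((M / s) * post d p t x y + (2 / Real.sqrt s) * p x) :=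
          integral_mono hF_int hbound_int key
      _ = (M / s) * (∫ x, post d p t x y) + (2 / Real.sqrt s) * ∫ x, p x := by
          rw [integral_add (hpost_int.const_mul _) (hp_int.const_mul _),
            integral_const_mul, integral_const_mul]
      _ = M / s + 2 / Real.sqrt s := by rw [hpost1, hp1]; ring
  -- final arithmetic
  refine hInt_le.trans ?_
  have hd1 : (1:ℝ) ≤ (d:ℝ) := by exact_mod_cast hd
  rw [hM_def]
  have expand : (2 * a + 3 * Real.sqrt s) / s + 2 / Real.sqrt s
      = 2 * (a / s) + 5 * (1 / Real.sqrt s) := by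
    rw [show (2 * a + 3 * Real.sqrt s) / s = 2 * (a/s) + 3 * (Real.sqrt s / s) by ring,
      Real.sqrt_div_self']
    ring
  rw [expand]
  have h5d : 5 * (1 / Real.sqrt s) ≤ 5 * ((d:ℝ) / Real.sqrt s) := by
    apply mul_le_mul_of_nonneg_left _ (by norm_num)
    gcongr ?_ / Real.sqrt s
  have h2a : 2 * (a / s) ≤ 5 * (a / s) := by
    have : (0:ℝ) ≤ a / s := div_nonneg ha hs.le
    linarith
  linarith
end
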